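/- Let ω* ⊆ S be a syndrome with |ω*| = K (for instance a critical syndrome of maximal cardinality), and define D = ω* ∪ {s ∈ S : w(s) ≥ max_{s'∈ω*} w(s')}. Then every K-element subset of D is a syndrome, i.e. every subset of D of cardinality K has weight sum at least T. -/

import Mathlib

open scoped Classical

noncomputable section

/-- `ω` is a syndrome for weights `w` and threshold `T`: its weight sum is at least `T`. -/
def IsSyndrome {S : Type*} (w : S → ℝ) (T : ℝ) (ω : Finset S) : Prop :=
  T ≤ ∑ s ∈ ω, w s

/-- `ω` is a critical syndrome: it is a syndrome, but every proper subset of it is not. -/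
def IsCritical {S : Type*} (w : S → ℝ) (T : ℝ) (ω : Finset S) : Prop :=
  (T ≤ ∑ s ∈ ω, w s) ∧ ∀ ω' ⊂ ω, ∑ s ∈ ω', w s < T

/-- Let `ω*` be a syndrome of cardinality `K`, and let
`D = ω* ∪ {s : w(s) ≥ max_{s' ∈ ω*} w(s')}`. Then every `K`-element subset of `D` is a
syndrome. -/
theorem every_K_subset_of_D_is_syndrome
    {S : Type*} [Fintype S] [Nonempty S] (w : S → ℝ) (hw : ∀ s, 0 < w s)
    (T : ℝ) (hT : 0 < T) (hST : T ≤ ∑ s, w s) (K : ℕ)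
    (ωstar : Finset S) (hstar_syn : IsSyndrome w T ωstar) (hstar_card : ωstar.card = K)
    (D : Finset S)
    (hD : D = ωstar ∪ Finset.univ.filter fun s => ∀ s' ∈ ωstar, w s' ≤ w s) :
    ∀ ω ⊆ D, ω.card = K → IsSyndrome w T ω := by
  intro ω hω hcard
  subst hD
  have hmem : ∀ x ∈ ω \ ωstar, ∀ s' ∈ ωstar, w s' ≤ w x := by
    intro x hx s' hs'
    have hx' := Finset.mem_sdiff.mp hx
    rcases Finset.mem_union.mp (hω hx'.1) with h | h
    · exact absurd h hx'.2
    · exact (Finset.mem_filter.mp h).2 s' hs'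
  have hcardeq : (ωstar \ ω).card = (ω \ ωstar).card := by
    have h1 := Finset.card_sdiff_add_card_inter ωstar ω
    have h2 := Finset.card_sdiff_add_card_inter ω ωstar
    rw [Finset.inter_comm] at h2
    omega
  have e := Finset.equivOfCardEq hcardeq
  have hsum : ∑ x ∈ ωstar \ ω, w x ≤ ∑ x ∈ ω \ ωstar, w x := by
    rw [← Finset.sum_coe_sort (ωstar \ ω) w, ← Finset.sum_coe_sort (ω \ ωstar) w,
      ← Equiv.sum_comp e (fun x : (ω \ ωstar : Finset S) => w x)]
    apply Finset.sum_le_sum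
    intro i _
    exact hmem (e i) (e i).2 i (Finset.mem_sdiff.mp i.2).1
  have hle : ∑ x ∈ ωstar, w x ≤ ∑ x ∈ ω, w x := by
    have hs1 : ∑ x ∈ ωstar \ ω, w x + ∑ x ∈ ωstar ∩ ω, w x = ∑ x ∈ ωstar, w x := by
      rw [← Finset.sdiff_inter_self_left ωstar ω]
      exact Finset.sum_sdiff Finset.inter_subset_left
    have hs2 : ∑ x ∈ ω \ ωstar, w x + ∑ x ∈ ω ∩ ωstar, w x = ∑ x ∈ ω, w x := by
      rw [← Finset.sdiff_inter_self_left ω ωstar]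
      exact Finset.sum_sdiff Finset.inter_subset_left
    rw [← hs1, ← hs2, Finset.inter_comm]
    exact add_le_add hsum le_rfl
  exact le_trans hstar_syn hle
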